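/- For each i ∈ {1,2,3}, the Jacobian matrix DP(u_i) at the axial fixed point u_i satisfies (DP(u_i))_{ji} = 0 for all j ≠ i, all three diagonal entries (DP(u_i))_{jj}, j = 1,2,3, are positive, and 0 < (DP(u_i))_{ii} < 1. -/

import Mathlib

open Set Filter Metric MeasureTheory

noncomputable section

/-- The ambient space: ℝ³ with the Euclidean norm. -/
abbrev V3 : Type := EuclideanSpace ℝ (Fin 3)

/-- Standard basis vectors. -/
def e3 (i : Fin 3) : V3 := EuclideanSpace.single i 1

/-- The non-negative octant `C`. -/
def octC : Set V3 := {x | ∀ i, 0 ≤ x i}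

/-- The interior of the octant, `C°`. -/
def octInt : Set V3 := {x | ∀ i, 0 < x i}

/-- The coordinate subspace `H_I`. -/
def planeH (I : Finset (Fin 3)) : Set V3 := {x | ∀ j ∉ I, x j = 0}

/-- The face `H_I⁺ = C ∩ H_I` (as a set of points, or the cone `K_I` of vectors). -/
def faceH (I : Finset (Fin 3)) : Set V3 := octC ∩ planeH I

/-- The relative interior `Ḣ_I⁺` (resp. `K̇_I`). -/
def faceDot (I : Finset (Fin 3)) : Set V3 := {x ∈ faceH I | ∀ i ∈ I, 0 < x i}

/-- The relative boundary `∂H_I⁺`. -/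
def faceBd (I : Finset (Fin 3)) : Set V3 := faceH I \ faceDot I

/-- The Jacobian matrix `DP(x)` of a map `P` at `x`. -/
def jacM (P : V3 → V3) (x : V3) : Matrix (Fin 3) (Fin 3) ℝ :=
  Matrix.of fun i j => (fderiv ℝ P x (e3 j)) i

/-- The `I × I` submatrix of a `3 × 3` matrix. -/
def subM (I : Finset (Fin 3)) (M : Matrix (Fin 3) (Fin 3) ℝ) :
    Matrix {i // i ∈ I} {i // i ∈ I} ℝ :=
  M.submatrix Subtype.val Subtype.val

/-- The standing hypotheses (H1), (H2), (H3′), (H4′), (H5), (H6):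
`Pt` is the `C²` diffeomorphism `P̃` of an open set `U ⊇ C` onto its image,
`Qt` its inverse, and `u i` are the axial fixed points. -/
structure CompSetting where
  U : Set V3
  Pt : V3 → V3
  Qt : V3 → V3
  u : Fin 3 → V3
  -- (H1): C² diffeomorphism of an open neighbourhood of C onto its image
  openU : IsOpen U
  octSubU : octC ⊆ U
  smooth : ContDiffOn ℝ 2 Pt U
  openImage : IsOpen (Pt '' U)
  smoothInv : ContDiffOn ℝ 2 Qt (Pt '' U)
  left_inv : ∀ x ∈ U, Qt (Pt x) = x
  right_inv : ∀ y ∈ Pt '' U, Pt (Qt y) = y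
  -- (H2)
  h2 : ∀ I : Finset (Fin 3), I.Nonempty →
    ∀ A ∈ ({faceH I, faceDot I, faceBd I} : Set (Set V3)),
      Pt '' A ⊆ A ∧ ∀ x ∈ octC, Pt x ∈ A → x ∈ A
  -- (H3′)
  h3 : ∀ I : Finset (Fin 3), I.Nonempty → ∀ x ∈ faceDot I,
      (∀ i ∈ I, ∀ j ∈ I, 0 < (jacM Pt x)⁻¹ i j) ∧
      ∀ v : Fin 3 → ℝ, (∀ j, 0 ≤ v j) → (∀ j ∈ I, v j = 0) → v ≠ 0 →
        ∃ j ∈ I, 0 < (jacM Pt x)⁻¹.mulVec v j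
  -- (H4′)
  h4_mem : ∀ i, u i ∈ faceDot {i}
  h4_fix : ∀ i, Pt (u i) = u i
  h4_unique : ∀ i, ∀ y ∈ faceDot {i}, Pt y = y → y = u i
  h4_diag : ∀ i, 0 < jacM Pt (u i) i i ∧ jacM Pt (u i) i i < 1
  h4_off : ∀ i j, j ≠ i → jacM Pt (u i) i j < 0
  -- (H5)
  h5 : ∀ I : Finset (Fin 3), I.Nonempty → ∀ x ∈ faceDot I, x ≠ 0 →
    ∀ p : ℕ, 1 ≤ p → Pt^[p] x = x →
      ∃ μ : ℝ, (μ : ℂ) ∈ spectrum ℂ ((subM I (jacM (Pt^[p]) x)).map Complex.ofReal) ∧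
        (∀ ν ∈ spectrum ℂ ((subM I (jacM (Pt^[p]) x)).map Complex.ofReal),
          |μ| ≤ ‖ν‖) ∧ μ < 1
  -- (H6)
  h6 : ∀ I : Finset (Fin 3), I.Nonempty → ∀ x ∈ faceDot I, ∀ y ∈ faceDot I,
    (∀ i ∈ I, 0 < Pt x i) → (∀ i ∈ I, Pt x i < Pt y i) →
    ∀ i ∈ I, x i / y i ≤ Pt x i / Pt y i

/-- Sum of the coordinates. -/
def sumCoords (x : V3) : ℝ := x 0 + x 1 + x 2

/-- The radial projection `R`. -/
def radProj (x : V3) : V3 := (sumCoords x)⁻¹ • x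

/-- The standard probability 2-simplex `△`. -/
def simplex2 : Set V3 := {x ∈ octC | sumCoords x = 1}

/-- The plane `{x : x₁ + x₂ + x₃ = 1}` containing `△`. -/
def plane1 : Set V3 := {x | sumCoords x = 1}

/-- The ω-limit set of `x` under `P`. -/
def omegaLim (P : V3 → V3) (x : V3) : Set V3 :=
  {y | ∃ φ : ℕ → ℕ, StrictMono φ ∧ Tendsto (fun k => P^[φ k] x) atTop (nhds y)}

/-- `Γ = {αx : α ∈ [0,1], x ∈ S}`. -/
def gammaOf (S : Set V3) : Set V3 := {y | ∃ α ∈ Icc (0:ℝ) 1, ∃ x ∈ S, y = α • x}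

/-- `S` is a carrying simplex for the map `P = Pt|_C`. -/
def IsCarryingSimplex (E : CompSetting) (S : Set V3) : Prop :=
  IsCompact S ∧ S ⊆ octC ∧ (0 : V3) ∉ S ∧ E.Pt '' S = S ∧
  -- (i) the radial projection restricts to a homeomorphism of S onto △
  (∃ h : S ≃ₜ simplex2, ∀ p : S, (h p : V3) = radProj (p : V3)) ∧
  -- (ii) unordered
  (∀ x ∈ S, ∀ y ∈ S, x ≠ y → ¬ ∀ i, x i < y i) ∧
  (∀ x ∈ S ∩ octInt, ∀ y ∈ S ∩ octInt, x ≠ y → ¬ ∀ i, x i ≤ y i) ∧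
  -- (iii) all nontrivial ω-limit sets lie in S
  (∀ x ∈ octC, x ≠ 0 → omegaLim E.Pt x ⊆ S) ∧
  -- (iv) Γ is the global attractor: compact, invariant, attracting
  IsCompact (gammaOf S) ∧ E.Pt '' gammaOf S = gammaOf S ∧
  (∀ B : Set V3, B ⊆ octC → Bornology.IsBounded B → ∀ ε > 0, ∃ n₀ : ℕ,
    ∀ n ≥ n₀, ∀ b ∈ B, E.Pt^[n] b ∈ Metric.thickening ε (gammaOf S))

/-- The set `C₁(A, x)` of limiting unit directions of `A` at `x`. -/
def dirSet (A : Set V3) (x : V3) : Set V3 :=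
  {v | ∃ s : ℕ → V3, (∀ n, s n ∈ A ∧ s n ≠ x) ∧
    Tendsto s atTop (nhds x) ∧
    Tendsto (fun n => (‖s n - x‖)⁻¹ • (s n - x)) atTop (nhds v)}

/-- The tangent cone `C(A, x) = [0, ∞) · C₁(A, x)`. -/
def tanCone (A : Set V3) (x : V3) : Set V3 :=
  {v | ∃ t : ℝ, 0 ≤ t ∧ ∃ z ∈ dirSet A x, v = t • z}

/-- `S` is a `C¹` submanifold-with-corners neatly embedded in `C`, diffeomorphic
to `△` via the radial projection: `(R|_S)⁻¹(y) = ρ(y)·y` with `ρ` a `C¹` positive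
function on a relatively open neighbourhood of `△` in the plane. -/
def NeatC1 (S : Set V3) : Prop :=
  ∃ Ut : Set V3, Ut ⊆ plane1 ∧ simplex2 ⊆ Ut ∧
    (∃ O : Set V3, IsOpen O ∧ Ut = O ∩ plane1) ∧
    ∃ ρ : V3 → ℝ, ContDiffOn ℝ 1 ρ Ut ∧ (∀ y ∈ Ut, 0 < ρ y) ∧
      ∀ y ∈ simplex2, ρ y • y ∈ S ∧ radProj (ρ y • y) = y

end


lemma coordAdd (x : V3) (t : ℝ) (l m : Fin 3) :
    (x + t • e3 l) m = x m + t * (if m = l then 1 else 0) := by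
  simp [e3, PiLp.add_apply, PiLp.smul_apply, EuclideanSpace.single_apply, smul_eq_mul]

lemma faceH_univ_eq : faceH Finset.univ = octC := by
  ext x
  simp [faceH, planeH, octC]

lemma jac_hasDerivAt (E : CompSetting) (i l j : Fin 3) :
    HasDerivAt (fun t : ℝ => E.Pt (E.u i + t • e3 l) j)
      (jacM E.Pt (E.u i) j l) 0 := by
  have hu : E.u i ∈ octC := (E.h4_mem i).1.1
  have hmem : E.u i ∈ E.U := E.octSubU hu
  have hdiff : DifferentiableAt ℝ E.Pt (E.u i) :=
    (E.smooth.contDiffAt (E.openU.mem_nhds hmem)).differentiableAt (by norm_num)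
  have hline : HasDerivAt (fun t : ℝ => E.u i + t • e3 l) (e3 l) 0 := by
    simpa using ((hasDerivAt_id (0:ℝ)).smul_const (e3 l)).const_add (E.u i)
  have h0 : E.u i + (0:ℝ) • e3 l = E.u i := by simp
  have hF : HasFDerivAt E.Pt (fderiv ℝ E.Pt (E.u i)) (E.u i + (0:ℝ) • e3 l) := by
    rw [h0]; exact hdiff.hasFDerivAt
  have h1 : HasDerivAt (fun t : ℝ => E.Pt (E.u i + t • e3 l))
      (fderiv ℝ E.Pt (E.u i) (e3 l)) 0 := hF.comp_hasDerivAt 0 hline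
  have h2 := (EuclideanSpace.proj j (𝕜 := ℝ)).hasFDerivAt.comp_hasDerivAt 0 h1
  exact h2

/-- At each axial fixed point the Jacobian is triangular (column i vanishes off
the diagonal), its diagonal entries are positive, and the (i,i) entry lies in (0,1). -/
theorem jacobian_at_axial_fixed_point (E : CompSetting) :
    ∀ i : Fin 3,
      (∀ j, j ≠ i → jacM E.Pt (E.u i) j i = 0) ∧
      (∀ j, 0 < jacM E.Pt (E.u i) j j) ∧
      0 < jacM E.Pt (E.u i) i i ∧ jacM E.Pt (E.u i) i i < 1 := by
  intro i
  have hui : 0 < E.u i i := (E.h4_mem i).2 i (Finset.mem_singleton_self i)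
  have huz : ∀ m, m ≠ i → E.u i m = 0 := by
    intro m hm
    exact (E.h4_mem i).1.2 m (by simpa [Finset.mem_singleton] using hm)
  have huoct : E.u i ∈ octC := (E.h4_mem i).1.1
  have hface : ∀ I : Finset (Fin 3), I.Nonempty → ∀ x ∈ faceH I, E.Pt x ∈ faceH I := by
    intro I hI x hx
    exact (E.h2 I hI (faceH I) (by simp)).1 ⟨x, hx, rfl⟩
  have hoct : ∀ x ∈ octC, E.Pt x ∈ octC := by
    intro x hx
    have := hface Finset.univ Finset.univ_nonempty x (by rwa [faceH_univ_eq])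
    rwa [faceH_univ_eq] at this
  -- column i is zero off the diagonal
  have hcol : ∀ j, j ≠ i → jacM E.Pt (E.u i) j i = 0 := by
    intro j hj
    have hd := jac_hasDerivAt E i i j
    have heq : (fun t : ℝ => E.Pt (E.u i + t • e3 i) j) =ᶠ[nhds (0:ℝ)] (fun _ => 0) := by
      have hopen : Set.Ioi (-(E.u i i)) ∈ nhds (0:ℝ) :=
        isOpen_Ioi.mem_nhds (Set.mem_Ioi.mpr (by linarith))
      filter_upwards [hopen] with t ht
      have ht' : -(E.u i i) < t := Set.mem_Ioi.mp ht
      have hxm : E.u i + t • e3 i ∈ faceH {i} := by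
        refine ⟨?_, ?_⟩
        · intro m
          rw [coordAdd]
          by_cases hm : m = i
          · subst hm; simp; linarith
          · simpa [hm] using huoct m
        · intro m hm
          have hmne : m ≠ i := by simpa [Finset.mem_singleton] using hm
          rw [coordAdd]
          simp [hmne, huz m hmne]
      have hPm := hface {i} ⟨i, Finset.mem_singleton_self i⟩ _ hxm
      exact hPm.2 j (by simpa [Finset.mem_singleton] using hj)
    exact hd.unique ((hasDerivAt_const 0 (0:ℝ)).congr_of_eventuallyEq heq)
  -- off-diagonal entries outside row i vanish
  have hoff : ∀ k j, j ≠ i → k ≠ i → k ≠ j → jacM E.Pt (E.u i) k j = 0 := by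
    intro k j hj hk hkj
    have hd := jac_hasDerivAt E i j k
    have hz : ∀ t ∈ Set.Ici (0:ℝ), E.Pt (E.u i + t • e3 j) k = 0 := by
      intro t ht
      have ht' : (0:ℝ) ≤ t := ht
      have hxm : E.u i + t • e3 j ∈ faceH {i, j} := by
        refine ⟨?_, ?_⟩
        · intro m
          rw [coordAdd]
          by_cases hm : m = j
          · subst hm
            simp [huz m hj]
            linarith
          · simpa [hm] using huoct m
        · intro m hm
          have hmi : m ≠ i := by
            intro h; exact hm (by simp [h])
          have hmj : m ≠ j := by
            intro h; exact hm (by simp [h])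
          rw [coordAdd]
          simp [hmj, huz m hmi]
      have hPm := hface {i, j} ⟨i, by simp⟩ _ hxm
      exact hPm.2 k (by simp [hk, hkj])
    have h1 : HasDerivWithinAt (fun t : ℝ => E.Pt (E.u i + t • e3 j) k)
        (jacM E.Pt (E.u i) k j) (Set.Ici 0) 0 := hd.hasDerivWithinAt
    have h2 : HasDerivWithinAt (fun t : ℝ => E.Pt (E.u i + t • e3 j) k)
        (0:ℝ) (Set.Ici 0) 0 :=
      (hasDerivWithinAt_const 0 _ (0:ℝ)).congr hz (hz 0 Set.self_mem_Ici)
    exact (uniqueDiffOn_Ici 0 0 Set.self_mem_Ici).eq_deriv _ h1 h2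
  -- diagonal entries off row i are nonnegative
  have hdiagnn : ∀ j, j ≠ i → 0 ≤ jacM E.Pt (E.u i) j j := by
    intro j hj
    have hd := jac_hasDerivAt E i j j
    have hg0 : E.Pt (E.u i + (0:ℝ) • e3 j) j = 0 := by
      have h0 : E.u i + (0:ℝ) • e3 j = E.u i := by simp
      rw [h0, E.h4_fix i]
      exact huz j hj
    have hslope := hasDerivAt_iff_tendsto_slope.mp hd
    have hmono : Tendsto (slope (fun t : ℝ => E.Pt (E.u i + t • e3 j) j) 0)
        (nhdsWithin (0:ℝ) (Set.Ioi 0)) (nhds (jacM E.Pt (E.u i) j j)) :=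
      hslope.mono_left (nhdsWithin_mono _ (fun x hx => ne_of_gt hx))
    refine ge_of_tendsto hmono ?_
    filter_upwards [self_mem_nhdsWithin] with t ht
    have ht' : (0:ℝ) < t := ht
    have hxm : E.u i + t • e3 j ∈ octC := by
      intro m
      rw [coordAdd]
      by_cases hm : m = j
      · subst hm
        have := huoct m
        simp
        positivity
      · simpa [hm] using huoct m
    have hgt : 0 ≤ E.Pt (E.u i + t • e3 j) j := hoct _ hxm j
    rw [slope_def_field]
    rw [hg0]
    have : (0:ℝ) ≤ E.Pt (E.u i + t • e3 j) j - 0 := by linarith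
    exact div_nonneg (by linarith) (by linarith)
  -- determinant is nonzero
  have hinv : 0 < (jacM E.Pt (E.u i))⁻¹ i i :=
    (E.h3 {i} ⟨i, Finset.mem_singleton_self i⟩ (E.u i) (E.h4_mem i)).1
      i (Finset.mem_singleton_self i) i (Finset.mem_singleton_self i)
  have hdetne : (jacM E.Pt (E.u i)).det ≠ 0 := by
    intro h
    have hnotunit : ¬ IsUnit (jacM E.Pt (E.u i)).det := by
      rw [h, isUnit_zero_iff]
      exact zero_ne_one
    rw [Matrix.nonsing_inv_apply_not_isUnit _ hnotunit] at hinv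
    simp at hinv
  have hprod : (jacM E.Pt (E.u i)).det =
      jacM E.Pt (E.u i) 0 0 * jacM E.Pt (E.u i) 1 1 * jacM E.Pt (E.u i) 2 2 := by
    rw [Matrix.det_fin_three]
    have hI : i = 0 ∨ i = 1 ∨ i = 2 := by omega
    rcases hI with rfl | rfl | rfl
    · rw [hcol 1 (by decide), hcol 2 (by decide), hoff 2 1 (by decide) (by decide) (by decide),
        hoff 1 2 (by decide) (by decide) (by decide)]
      ring
    · rw [hcol 0 (by decide), hcol 2 (by decide), hoff 2 0 (by decide) (by decide) (by decide),
        hoff 0 2 (by decide) (by decide) (by decide)]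
      ring
    · rw [hcol 0 (by decide), hcol 1 (by decide), hoff 1 0 (by decide) (by decide) (by decide),
        hoff 0 1 (by decide) (by decide) (by decide)]
      ring
  have hne0 : jacM E.Pt (E.u i) 0 0 * jacM E.Pt (E.u i) 1 1 * jacM E.Pt (E.u i) 2 2 ≠ 0 := by
    rw [← hprod]; exact hdetne
  have hfac : jacM E.Pt (E.u i) 0 0 ≠ 0 ∧ jacM E.Pt (E.u i) 1 1 ≠ 0 ∧
      jacM E.Pt (E.u i) 2 2 ≠ 0 := by
    refine ⟨fun h => hne0 ?_, fun h => hne0 ?_, fun h => hne0 ?_⟩ <;> rw [h] <;> ring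
  have hdiagne : ∀ j, jacM E.Pt (E.u i) j j ≠ 0 := by
    intro j
    fin_cases j
    · exact hfac.1
    · exact hfac.2.1
    · exact hfac.2.2
  refine ⟨hcol, ?_, (E.h4_diag i).1, (E.h4_diag i).2⟩
  intro j
  rcases eq_or_ne j i with rfl | hne
  · exact (E.h4_diag j).1
  · exact (hdiagnn j hne).lt_of_ne (Ne.symm (hdiagne j))
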